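/- arXiv:2501.03364 — 2 statements merged into one kernel-verified Lean document; each statement's English description precedes it below -/
import Mathlib

section
/- Let L₁ (signal) and L₂ (noise) be linear operators on a Hilbert space, ψ a unit vector, and Π the orthogonal projection onto span{ψ, L₂ψ}. If Var_ψ(L₂) > 0, then ⟨ψ, L₁†(I − Π)L₁ψ⟩ = Var_ψ(L₁) − |Cov_ψ(L₁, L₂)|²/Var_ψ(L₂), where Cov_ψ(A,B) = ⟨ψ, A†Bψ⟩ − ⟨ψ, A†ψ⟩⟨ψ, Bψ⟩ and Var_ψ(A) = Cov_ψ(A,A). -/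
/-- For bounded operators `L₁` (signal) and `L₂` (noise), a unit vector
`ψ`, and `P` the orthogonal projection onto `span{ψ, L₂ψ}`: if `Var_ψ(L₂) > 0`, then
`⟨ψ, L₁†(I − P)L₁ψ⟩ = Var_ψ(L₁) − |Cov_ψ(L₁, L₂)|² / Var_ψ(L₂)`. -/
theorem stmt_1
    {H : Type*} [NormedAddCommGroup H] [InnerProductSpace ℂ H]
    (L₁ L₂ : H →L[ℂ] H) (ψ : H) (hψ : ‖ψ‖ = 1)
    (P : H →ₗ[ℂ] H)
    (hrange : LinearMap.range P = Submodule.span ℂ {ψ, L₂ ψ})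
    (hidem : P ∘ₗ P = P)
    (hsa : ∀ x y : H, (inner ℂ (P x) y : ℂ) = inner ℂ x (P y))
    (hvar : (0 : ℝ) < ‖L₂ ψ‖ ^ 2 - ‖(inner ℂ ψ (L₂ ψ) : ℂ)‖ ^ 2) :
    (inner ℂ (L₁ ψ) (L₁ ψ - P (L₁ ψ)) : ℂ)
      = (((‖L₁ ψ‖ ^ 2 - ‖(inner ℂ ψ (L₁ ψ) : ℂ)‖ ^ 2) : ℝ) : ℂ)
        - (((‖(inner ℂ (L₁ ψ) (L₂ ψ) : ℂ) - inner ℂ (L₁ ψ) ψ * inner ℂ ψ (L₂ ψ)‖ ^ 2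
            / (‖L₂ ψ‖ ^ 2 - ‖(inner ℂ ψ (L₂ ψ) : ℂ)‖ ^ 2)) : ℝ) : ℂ) := by
  set u := L₁ ψ with hu
  set c : ℂ := inner ℂ ψ (L₂ ψ) with hc
  set d : H := L₂ ψ - c • ψ with hd
  set v : ℝ := ‖L₂ ψ‖ ^ 2 - ‖c‖ ^ 2 with hv
  have hψψ : (inner ℂ ψ ψ : ℂ) = 1 := by
    rw [inner_self_eq_norm_sq_to_K, hψ]; norm_num
  have hψd : (inner ℂ ψ d : ℂ) = 0 := by
    simp [hd, inner_sub_right, inner_smul_right, hψψ, hc, hψ]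
  have hdψ : (inner ℂ d ψ : ℂ) = 0 := by
    rw [← inner_conj_symm, hψd, map_zero]
  have hdd : (inner ℂ d d : ℂ) = (v : ℂ) := by
    have hc' : (inner ℂ (L₂ ψ) ψ : ℂ) = starRingEnd ℂ c := by rw [hc, inner_conj_symm]
    simp only [hd, inner_sub_left, inner_sub_right, inner_smul_left, inner_smul_right,
      hψψ, mul_one, hc', Complex.conj_conj]
    rw [inner_self_eq_norm_sq_to_K (𝕜 := ℂ), RCLike.conj_mul, hv]
    push_cast
    ring_nf
    rfl
  set w : H := (inner ℂ ψ u : ℂ) • ψ + ((inner ℂ d u : ℂ) / (v : ℂ)) • d with hw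
  have hvne : (v : ℂ) ≠ 0 := by
    exact_mod_cast (ne_of_gt (by exact_mod_cast hvar))
  have hψuw : (inner ℂ ψ (u - w) : ℂ) = 0 := by
    simp [hw, inner_sub_right, inner_add_right, inner_smul_right, hψψ, hψd, hψ]
  have hduw : (inner ℂ d (u - w) : ℂ) = 0 := by
    simp [hw, inner_sub_right, inner_add_right, inner_smul_right, hdψ, hdd]
    field_simp
    have hn : ((‖d‖ : ℝ) : ℂ) ^ 2 = v := by rw [← hdd]; exact (inner_self_eq_norm_sq_to_K d).symm
    rw [hn]; ring
  have hL2uw : (inner ℂ (L₂ ψ) (u - w) : ℂ) = 0 := by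
    have : L₂ ψ = d + c • ψ := by simp [hd]
    rw [this, inner_add_left, inner_smul_left, hψuw, hduw]; ring
  have hspan : ∀ y ∈ Submodule.span ℂ ({ψ, L₂ ψ} : Set H), (inner ℂ y (u - w) : ℂ) = 0 := by
    intro y hy
    induction hy using Submodule.span_induction with
    | mem x hx => rcases hx with h | h <;> subst h
                  · exact hψuw
                  · exact hL2uw
    | zero => simp
    | add x y _ _ hx hy => rw [inner_add_left, hx, hy]; ring
    | smul a x _ hx => rw [inner_smul_left, hx]; ring
  have hwmem : w ∈ Submodule.span ℂ ({ψ, L₂ ψ} : Set H) := by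
    have hψm : ψ ∈ Submodule.span ℂ ({ψ, L₂ ψ} : Set H) :=
      Submodule.subset_span (by left; rfl)
    have hL2m : L₂ ψ ∈ Submodule.span ℂ ({ψ, L₂ ψ} : Set H) :=
      Submodule.subset_span (by right; rfl)
    have hdm : d ∈ Submodule.span ℂ ({ψ, L₂ ψ} : Set H) := by
      rw [hd]; exact Submodule.sub_mem _ hL2m (Submodule.smul_mem _ _ hψm)
    exact Submodule.add_mem _ (Submodule.smul_mem _ _ hψm) (Submodule.smul_mem _ _ hdm)
  have hPfix : ∀ x ∈ Submodule.span ℂ ({ψ, L₂ ψ} : Set H), P x = x := by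
    intro x hx
    rw [← hrange] at hx
    obtain ⟨z, hz⟩ := hx
    have := LinearMap.congr_fun hidem z
    simp only [LinearMap.comp_apply] at this
    rw [← hz, this]
  have hPw : P w = w := hPfix w hwmem
  have hPuw0 : P (u - w) = 0 := by
    have hmem : P (u - w) ∈ Submodule.span ℂ ({ψ, L₂ ψ} : Set H) := by
      rw [← hrange]; exact ⟨u - w, rfl⟩
    have h1 : (inner ℂ (P (u - w)) (P (u - w)) : ℂ) = 0 := by
      rw [hsa]
      have := hPfix _ hmem
      rw [this]
      rw [← inner_conj_symm, hspan _ hmem, map_zero]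
    exact inner_self_eq_zero.mp h1
  have hPu : P u = w := by
    have h : P u - w = 0 := by rw [← hPw, ← map_sub, hPuw0]
    exact sub_eq_zero.mp h
  rw [hPu]
  have hexp : (inner ℂ u (u - w) : ℂ)
      = inner ℂ u u - (inner ℂ ψ u * inner ℂ u ψ + (inner ℂ d u / (v:ℂ)) * inner ℂ u d) := by
    simp only [hw, inner_sub_right, inner_add_right, inner_smul_right]
  rw [hexp]
  have h1 : (inner ℂ u u : ℂ) = ((‖u‖^2 : ℝ) : ℂ) := by
    rw [inner_self_eq_norm_sq_to_K]; norm_cast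
  have h2 : (inner ℂ ψ u * inner ℂ u ψ : ℂ) = ((‖(inner ℂ ψ u : ℂ)‖^2 : ℝ) : ℂ) := by
    rw [← inner_conj_symm u ψ, RCLike.mul_conj]
    norm_cast
  have hud : (inner ℂ u d : ℂ) = inner ℂ u (L₂ ψ) - inner ℂ u ψ * c := by
    simp only [hd, inner_sub_right, inner_smul_right]; ring
  have h3 : ((inner ℂ d u / (v:ℂ)) * inner ℂ u d : ℂ)
      = ((‖(inner ℂ u (L₂ ψ) : ℂ) - inner ℂ u ψ * c‖^2 / v : ℝ) : ℂ) := by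
    rw [← inner_conj_symm d u, div_mul_eq_mul_div, RCLike.conj_mul, hud, Complex.ofReal_div,
      Complex.ofReal_pow]
    rfl
  rw [h1, h2, h3]
  push_cast
  ring
end

section
/- Let l₁, l₂ ∈ ℝ³ be zero-sum, orthogonal, unit vectors (Σ_α l_{j,α} = 0, l₁·l₂ = 0, ‖l_j‖₂ = 1), and suppose every entry of l₁ is nonzero. Then the supremum over probability distributions p on {1,2,3} of Var_p(l₁) − Cov_p(l₁,l₂)²/Var_p(l₂) (over p with Var_p(l₂) > 0; the expression is defined as Var_p(l₁) when Cov_p(l₁,l₂)=0 and Var_p(l₂)=0) equals ‖l₁‖₂⁴/‖l₁‖₁² = 1/‖l₁‖₁², attained by p_α = |l_{1,α}|/‖l₁‖₁. -/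
set_option maxHeartbeats 1000000

private lemma stmt8_hS (x0 x1 x2 y0 y1 y2 : ℝ)
    (h1 : x0+x1+x2 = 0) (h2 : y0+y1+y2 = 0) (h3 : x0*y0+x1*y1+x2*y2 = 0)
    (h4 : x0^2+x1^2+x2^2 = 1) (h5 : y0^2+y1^2+y2^2 = 1) :
    (x0*y1 - x1*y0 + x1*y2 - x2*y1 + x2*y0 - x0*y2)^2 = 3 := by
  linear_combination ((-1)*x2 + (-1)*x1 + (-1)*x0) * h1 + ((-1)*y2 + (-1)*y1 + (-1)*y0) * h2 + ((-1)*x2*y2 + 2*x2*y1 + 2*x2*y0 + 2*x1*y2 + (-1)*x1*y1 + 2*x1*y0 + 2*x0*y2 + 2*x0*y1 + (-1)*x0*y0) * h3 + (1 + y2^2 + (-2)*y1*y2 + y1^2 + (-2)*y0*y2 + (-2)*y0*y1 + y0^2) * h4 + (2 + (-2)*x1*x2 + (-2)*x0*x2 + (-2)*x0*x1) * h5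

private lemma stmt8_b01 (x0 x1 x2 y0 y1 y2 : ℝ)
    (h1 : x0+x1+x2 = 0) (h2 : y0+y1+y2 = 0) (h3 : x0*y0+x1*y1+x2*y2 = 0)
    (h4 : x0^2+x1^2+x2^2 = 1) (h5 : y0^2+y1^2+y2^2 = 1) :
    (y0 - y1)^2 = 3*x2^2 := by
  linear_combination ((-3/2)*x2 + (-2)*x2*y1^2 + (-5)*x2*y0*y1 + (-2)*x2*y0^2 + (3/2)*x1 + 2*x1*y1*y2 + 2*x1*y1^2 + 4*x1*y0*y2 + 5*x1*y0*y1 + 2*x1*y0^2 + (3/2)*x0 + 4*x0*y1*y2 + 2*x0*y1^2 + 2*x0*y0*y2 + 5*x0*y0*y1 + 2*x0*y0^2) * h1 + ((-3/2)*y2 + (3/2)*y1 + (3/2)*y0 + (-2)*x1^2*y1 + (-4)*x1^2*y0 + (-3)*x0*x1*y2 + (-3)*x0*x1*y1 + (-3)*x0*x1*y0 + (-4)*x0^2*y1 + (-2)*x0^2*y0) * h2 + ((-2)*x1*y1 + (-4)*x1*y0 + (-4)*x0*y1 + (-2)*x0*y0) * h3 + ((-3/2) + 2*y1^2 + 5*y0*y1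 + 2*y0^2) * h4 + ((3/2) + 3*x0*x1) * h5

private lemma stmt8_b12 (x0 x1 x2 y0 y1 y2 : ℝ)
    (h1 : x0+x1+x2 = 0) (h2 : y0+y1+y2 = 0) (h3 : x0*y0+x1*y1+x2*y2 = 0)
    (h4 : x0^2+x1^2+x2^2 = 1) (h5 : y0^2+y1^2+y2^2 = 1) :
    (y1 - y2)^2 = 3*x0^2 := by
  linear_combination (4*x2*y1^2 + 4*x2*y0*y1 + x2*y0^2 + (-4)*x1*y1*y2 + (-4)*x1*y1^2 + (-2)*x1*y0*y2 + (-4)*x1*y0*y1 + (-1)*x1*y0^2 + (-2)*x0*y1*y2 + (-4)*x0*y1^2 + 2*x0*y0*y2 + (-4)*x0*y0*y1 + (-1)*x0*y0^2) * h1 + (y2 + (-3)*y1 + (-1)*y0 + 4*x1^2*y1 + 2*x1^2*y0 + 6*x0*x1*y1 + (-3)*x0^2*y2 + 5*x0^2*y1 + x0^2*y0) * h2 + (4*x1*y1 + 2*x1*y0 + 2*x0*y1 + (-2)*x0*y0) * h3 + ((-4)*y1^2 + (-4)*y0*y1 + (-1)*y0^2) * h4 + (3*x0^2) * h5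

private lemma stmt8_b02 (x0 x1 x2 y0 y1 y2 : ℝ)
    (h1 : x0+x1+x2 = 0) (h2 : y0+y1+y2 = 0) (h3 : x0*y0+x1*y1+x2*y2 = 0)
    (h4 : x0^2+x1^2+x2^2 = 1) (h5 : y0^2+y1^2+y2^2 = 1) :
    (y0 - y2)^2 = 3*x1^2 := by
  linear_combination ((3/2)*x2 + (-2)*x2*y1^2 + x2*y0*y1 + x2*y0^2 + (-3/2)*x1 + 2*x1*y1*y2 + 2*x1*y1^2 + (-2)*x1*y0*y2 + (-1)*x1*y0*y1 + (-1)*x1*y0^2 + (-3/2)*x0 + (-2)*x0*y1*y2 + 2*x0*y1^2 + (-4)*x0*y0*y2 + (-1)*x0*y0*y1 + (-1)*x0*y0^2) * h1 + ((-1/2)*y2 + (1/2)*y1 + (-3/2)*y0 + (-2)*x1^2*y1 + 2*x1^2*y0 + 3*x0*x1*y2 + (-3)*x0*x1*y1 + 3*x0*x1*y0 + 3*x0^2*y2 + (-1)*x0^2*y1 + x0^2*y0) * h2 + ((-2)*x1*y1 + 2*x1*y0 + 2*x0*y1 + 4*x0*y0) * h3 + ((-3/2) + 2*y1^2 + (-1)*y0*y1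 + (-1)*y0^2) * h4 + ((3/2) + (-3)*x0*x1 + (-3)*x0^2) * h5

private lemma stmt8_V1 (x0 x1 x2 P Q R : ℝ) (hp : P+Q+R = 1) :
    (P*x0^2+Q*x1^2+R*x2^2) - (P*x0+Q*x1+R*x2)^2
      = P*Q*(x0-x1)^2 + Q*R*(x1-x2)^2 + P*R*(x0-x2)^2 := by
  linear_combination (-(P*x0^2+Q*x1^2+R*x2^2)) * hp

private lemma stmt8_idI (x0 x1 x2 y0 y1 y2 P Q R : ℝ)
    (h1 : x0+x1+x2 = 0) (h2 : y0+y1+y2 = 0) (h3 : x0*y0+x1*y1+x2*y2 = 0)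
    (h4 : x0^2+x1^2+x2^2 = 1) (h5 : y0^2+y1^2+y2^2 = 1) (hp : P+Q+R = 1) :
    ((P*x0^2+Q*x1^2+R*x2^2) - (P*x0+Q*x1+R*x2)^2)
      * ((P*y0^2+Q*y1^2+R*y2^2) - (P*y0+Q*y1+R*y2)^2)
      - ((P*(x0*y0)+Q*(x1*y1)+R*(x2*y2)) - (P*x0+Q*x1+R*x2)*(P*y0+Q*y1+R*y2))^2
    = 3*(P*Q*R) := by
  have hS := stmt8_hS x0 x1 x2 y0 y1 y2 h1 h2 h3 h4 h5
  rw [stmt8_V1 x0 x1 x2 P Q R hp, stmt8_V1 y0 y1 y2 P Q R hp]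
  have hC : (P*(x0*y0)+Q*(x1*y1)+R*(x2*y2)) - (P*x0+Q*x1+R*x2)*(P*y0+Q*y1+R*y2)
      = P*Q*((x0-x1)*(y0-y1)) + Q*R*((x1-x2)*(y1-y2)) + P*R*((x0-x2)*(y0-y2)) := by
    linear_combination (-(P*(x0*y0)+Q*(x1*y1)+R*(x2*y2))) * hp
  rw [hC]
  linear_combination (P*Q*Q*R + P*Q*P*R + Q*R*P*R) * hS + (3*P*Q*R) * hp

private lemma stmt8_idII (x0 x1 x2 y0 y1 y2 P Q R : ℝ)
    (h1 : x0+x1+x2 = 0) (h2 : y0+y1+y2 = 0) (h3 : x0*y0+x1*y1+x2*y2 = 0)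
    (h4 : x0^2+x1^2+x2^2 = 1) (h5 : y0^2+y1^2+y2^2 = 1) (hp : P+Q+R = 1) :
    (P*y0^2+Q*y1^2+R*y2^2) - (P*y0+Q*y1+R*y2)^2
      = 3*(P*Q*x2^2 + Q*R*x0^2 + P*R*x1^2) := by
  rw [stmt8_V1 y0 y1 y2 P Q R hp,
    stmt8_b01 x0 x1 x2 y0 y1 y2 h1 h2 h3 h4 h5,
    stmt8_b12 x0 x1 x2 y0 y1 y2 h1 h2 h3 h4 h5,
    stmt8_b02 x0 x1 x2 y0 y1 y2 h1 h2 h3 h4 h5]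
  ring

private lemma stmt8_key (x y P Q R : ℝ)
    (hP : 0 ≤ P) (hQ : 0 ≤ Q) (hR : 0 ≤ R) (hs : P + Q + R = 1) :
    4*(P*Q*R)*(x+y)^2 ≤ P*Q*(x+y)^2 + Q*R*x^2 + R*P*y^2 := by
  have e : P*Q*(x+y)^2 + Q*R*x^2 + R*P*y^2 - 4*(P*Q*R)*(x+y)^2
      = Q*(R*x - P*(x+y))^2 + P*(R*y - Q*(x+y))^2 + R*(Q*x - P*y)^2 := by
    linear_combination (-(P*Q*(x+y)^2 + Q*R*x^2 + R*P*y^2)) * hs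
  nlinarith [mul_nonneg hQ (sq_nonneg (R*x - P*(x+y))), mul_nonneg hP (sq_nonneg (R*y - Q*(x+y))),
    mul_nonneg hR (sq_nonneg (Q*x - P*y)), e]

private lemma stmt8_star (x0 x1 x2 P Q R : ℝ) (hsum : x0 + x1 + x2 = 0)
    (hx0 : x0 ≠ 0) (hx1 : x1 ≠ 0) (hx2 : x2 ≠ 0)
    (hP : 0 ≤ P) (hQ : 0 ≤ Q) (hR : 0 ≤ R) (hs : P + Q + R = 1) :
    3*(P*Q*R)*(|x0|+|x1|+|x2|)^2 ≤ 3*(P*Q*x2^2 + Q*R*x0^2 + P*R*x1^2) := by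
  rcases hx0.lt_or_gt with h0 | h0 <;> rcases hx1.lt_or_gt with h1 | h1 <;>
    rcases hx2.lt_or_gt with h2 | h2
  · exfalso; linarith
  · rw [abs_of_neg h0, abs_of_neg h1, abs_of_pos h2, show x2 = -x0 - x1 by linarith]
    nlinarith [stmt8_key (-x0) (-x1) P Q R hP hQ hR hs]
  · rw [abs_of_neg h0, abs_of_pos h1, abs_of_neg h2, show x1 = -x2 - x0 by linarith]
    nlinarith [stmt8_key (-x2) (-x0) R P Q hR hP hQ (by linarith)]
  · rw [abs_of_neg h0, abs_of_pos h1, abs_of_pos h2, show x0 = -x1 - x2 by linarith]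
    nlinarith [stmt8_key x1 x2 Q R P hQ hR hP (by linarith)]
  · rw [abs_of_pos h0, abs_of_neg h1, abs_of_neg h2, show x0 = -x1 - x2 by linarith]
    nlinarith [stmt8_key (-x1) (-x2) Q R P hQ hR hP (by linarith)]
  · rw [abs_of_pos h0, abs_of_neg h1, abs_of_pos h2, show x1 = -x2 - x0 by linarith]
    nlinarith [stmt8_key x2 x0 R P Q hR hP hQ (by linarith)]
  · rw [abs_of_pos h0, abs_of_pos h1, abs_of_neg h2, show x2 = -x0 - x1 by linarith]
    nlinarith [stmt8_key x0 x1 P Q R hP hQ hR hs]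
  · exfalso; linarith

private lemma stmt8_ub (x0 x1 x2 y0 y1 y2 P Q R : ℝ) (h1 : x0+x1+x2 = 0) (h2 : y0+y1+y2 = 0)
    (h3 : x0*y0+x1*y1+x2*y2 = 0) (h4 : x0^2+x1^2+x2^2 = 1) (h5 : y0^2+y1^2+y2^2 = 1)
    (hx0 : x0 ≠ 0) (hx1 : x1 ≠ 0) (hx2 : x2 ≠ 0)
    (hP : 0 ≤ P) (hQ : 0 ≤ Q) (hR : 0 ≤ R) (hp : P + Q + R = 1) :
    ((P*x0^2+Q*x1^2+R*x2^2) - (P*x0+Q*x1+R*x2)^2)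
      - ((P*(x0*y0)+Q*(x1*y1)+R*(x2*y2)) - (P*x0+Q*x1+R*x2)*(P*y0+Q*y1+R*y2))^2
        / ((P*y0^2+Q*y1^2+R*y2^2) - (P*y0+Q*y1+R*y2)^2)
      ≤ 1 / (|x0|+|x1|+|x2|)^2 := by
  have hD : (0:ℝ) < |x0| + |x1| + |x2| := by
    have := abs_pos.2 hx0
    have := abs_nonneg x1
    have := abs_nonneg x2
    linarith
  have hV2 := stmt8_idII x0 x1 x2 y0 y1 y2 P Q R h1 h2 h3 h4 h5 hp
  have hI := stmt8_idI x0 x1 x2 y0 y1 y2 P Q R h1 h2 h3 h4 h5 hp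
  have hV2nonneg : 0 ≤ (P*y0^2+Q*y1^2+R*y2^2) - (P*y0+Q*y1+R*y2)^2 := by
    rw [hV2]
    have t1 : 0 ≤ P*Q*x2^2 := mul_nonneg (mul_nonneg hP hQ) (sq_nonneg x2)
    have t2 : 0 ≤ Q*R*x0^2 := mul_nonneg (mul_nonneg hQ hR) (sq_nonneg x0)
    have t3 : 0 ≤ P*R*x1^2 := mul_nonneg (mul_nonneg hP hR) (sq_nonneg x1)
    linarith
  rcases hV2nonneg.eq_or_lt with h0 | hV2pos
  · -- Var₂ = 0
    rw [← h0, div_zero, sub_zero]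
    have hsum0 : 3*(P*Q*x2^2 + Q*R*x0^2 + P*R*x1^2) = 0 := by rw [← hV2, ← h0]
    have t1 : 0 ≤ P*Q*x2^2 := mul_nonneg (mul_nonneg hP hQ) (sq_nonneg x2)
    have t2 : 0 ≤ Q*R*x0^2 := mul_nonneg (mul_nonneg hQ hR) (sq_nonneg x0)
    have t3 : 0 ≤ P*R*x1^2 := mul_nonneg (mul_nonneg hP hR) (sq_nonneg x1)
    have hPQ : P*Q = 0 := by
      have : P*Q*x2^2 = 0 := by linarith
      rcases mul_eq_zero.1 this with h | h
      · exact h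
      · exact absurd h (pow_ne_zero 2 hx2)
    have hQR : Q*R = 0 := by
      have : Q*R*x0^2 = 0 := by linarith
      rcases mul_eq_zero.1 this with h | h
      · exact h
      · exact absurd h (pow_ne_zero 2 hx0)
    have hPR : P*R = 0 := by
      have : P*R*x1^2 = 0 := by linarith
      rcases mul_eq_zero.1 this with h | h
      · exact h
      · exact absurd h (pow_ne_zero 2 hx1)
    rw [stmt8_V1 x0 x1 x2 P Q R hp, hPQ, hQR, hPR]
    simp only [zero_mul, zero_add, add_zero]
    positivity
  · have hV2ne : (P*y0^2+Q*y1^2+R*y2^2) - (P*y0+Q*y1+R*y2)^2 ≠ 0 := ne_of_gt hV2pos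
    have hstep : ((P*x0^2+Q*x1^2+R*x2^2) - (P*x0+Q*x1+R*x2)^2)
        - ((P*(x0*y0)+Q*(x1*y1)+R*(x2*y2)) - (P*x0+Q*x1+R*x2)*(P*y0+Q*y1+R*y2))^2
          / ((P*y0^2+Q*y1^2+R*y2^2) - (P*y0+Q*y1+R*y2)^2)
        = (((P*x0^2+Q*x1^2+R*x2^2) - (P*x0+Q*x1+R*x2)^2)
            * ((P*y0^2+Q*y1^2+R*y2^2) - (P*y0+Q*y1+R*y2)^2)
            - ((P*(x0*y0)+Q*(x1*y1)+R*(x2*y2)) - (P*x0+Q*x1+R*x2)*(P*y0+Q*y1+R*y2))^2)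
          / ((P*y0^2+Q*y1^2+R*y2^2) - (P*y0+Q*y1+R*y2)^2) := by
      field_simp
    rw [hstep, hI, div_le_div_iff₀ hV2pos (by positivity), one_mul, hV2]
    exact stmt8_star x0 x1 x2 P Q R h1 hx0 hx1 hx2 hP hQ hR hp

private lemma stmt8_val (x0 x1 x2 y0 y1 y2 : ℝ) (h1 : x0+x1+x2 = 0) (h2 : y0+y1+y2 = 0)
    (h3 : x0*y0+x1*y1+x2*y2 = 0) (h4 : x0^2+x1^2+x2^2 = 1) (h5 : y0^2+y1^2+y2^2 = 1)
    (hx0 : x0 ≠ 0) (hx1 : x1 ≠ 0) (hx2 : x2 ≠ 0) :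
    ((|x0|/(|x0|+|x1|+|x2|)*x0^2 + |x1|/(|x0|+|x1|+|x2|)*x1^2 + |x2|/(|x0|+|x1|+|x2|)*x2^2)
        - (|x0|/(|x0|+|x1|+|x2|)*x0 + |x1|/(|x0|+|x1|+|x2|)*x1 + |x2|/(|x0|+|x1|+|x2|)*x2)^2)
      - ((|x0|/(|x0|+|x1|+|x2|)*(x0*y0) + |x1|/(|x0|+|x1|+|x2|)*(x1*y1) + |x2|/(|x0|+|x1|+|x2|)*(x2*y2))
          - (|x0|/(|x0|+|x1|+|x2|)*x0 + |x1|/(|x0|+|x1|+|x2|)*x1 + |x2|/(|x0|+|x1|+|x2|)*x2)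
            * (|x0|/(|x0|+|x1|+|x2|)*y0 + |x1|/(|x0|+|x1|+|x2|)*y1 + |x2|/(|x0|+|x1|+|x2|)*y2))^2
        / ((|x0|/(|x0|+|x1|+|x2|)*y0^2 + |x1|/(|x0|+|x1|+|x2|)*y1^2 + |x2|/(|x0|+|x1|+|x2|)*y2^2)
            - (|x0|/(|x0|+|x1|+|x2|)*y0 + |x1|/(|x0|+|x1|+|x2|)*y1 + |x2|/(|x0|+|x1|+|x2|)*y2)^2)
      = 1 / (|x0|+|x1|+|x2|)^2 := by
  have a0 : (0:ℝ) < |x0| := abs_pos.2 hx0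
  have a1 : (0:ℝ) < |x1| := abs_pos.2 hx1
  have a2 : (0:ℝ) < |x2| := abs_pos.2 hx2
  have hD : (0:ℝ) < |x0| + |x1| + |x2| := by linarith
  have hp : |x0|/(|x0|+|x1|+|x2|) + |x1|/(|x0|+|x1|+|x2|) + |x2|/(|x0|+|x1|+|x2|) = 1 := by
    field_simp
  have hV2 := stmt8_idII x0 x1 x2 y0 y1 y2 (|x0|/(|x0|+|x1|+|x2|)) (|x1|/(|x0|+|x1|+|x2|))
    (|x2|/(|x0|+|x1|+|x2|)) h1 h2 h3 h4 h5 hp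
  have hI := stmt8_idI x0 x1 x2 y0 y1 y2 (|x0|/(|x0|+|x1|+|x2|)) (|x1|/(|x0|+|x1|+|x2|))
    (|x2|/(|x0|+|x1|+|x2|)) h1 h2 h3 h4 h5 hp
  have hV2' : (|x0|/(|x0|+|x1|+|x2|)*y0^2 + |x1|/(|x0|+|x1|+|x2|)*y1^2 + |x2|/(|x0|+|x1|+|x2|)*y2^2)
      - (|x0|/(|x0|+|x1|+|x2|)*y0 + |x1|/(|x0|+|x1|+|x2|)*y1 + |x2|/(|x0|+|x1|+|x2|)*y2)^2
      = 3*( |x0| * |x1| * |x2| )/(|x0|+|x1|+|x2|) := by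
    have habs : |x0| * |x1| *x2^2 + |x1| * |x2| *x0^2 + |x0| * |x2| *x1^2
        = ( |x0| * |x1| * |x2| ) * (|x0|+|x1|+|x2|) := by
      rw [← sq_abs x0, ← sq_abs x1, ← sq_abs x2]; ring
    rw [hV2, eq_div_iff hD.ne']
    field_simp
    linear_combination habs
  have hV2pos : (0:ℝ) < 3*( |x0| * |x1| * |x2| )/(|x0|+|x1|+|x2|) := by positivity
  have hV2ne : (|x0|/(|x0|+|x1|+|x2|)*y0^2 + |x1|/(|x0|+|x1|+|x2|)*y1^2 + |x2|/(|x0|+|x1|+|x2|)*y2^2)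
      - (|x0|/(|x0|+|x1|+|x2|)*y0 + |x1|/(|x0|+|x1|+|x2|)*y1 + |x2|/(|x0|+|x1|+|x2|)*y2)^2 ≠ 0 := by
    rw [hV2']; exact ne_of_gt hV2pos
  have hstep : ((|x0|/(|x0|+|x1|+|x2|)*x0^2 + |x1|/(|x0|+|x1|+|x2|)*x1^2 + |x2|/(|x0|+|x1|+|x2|)*x2^2)
        - (|x0|/(|x0|+|x1|+|x2|)*x0 + |x1|/(|x0|+|x1|+|x2|)*x1 + |x2|/(|x0|+|x1|+|x2|)*x2)^2)
      - ((|x0|/(|x0|+|x1|+|x2|)*(x0*y0) + |x1|/(|x0|+|x1|+|x2|)*(x1*y1) + |x2|/(|x0|+|x1|+|x2|)*(x2*y2))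
          - (|x0|/(|x0|+|x1|+|x2|)*x0 + |x1|/(|x0|+|x1|+|x2|)*x1 + |x2|/(|x0|+|x1|+|x2|)*x2)
            * (|x0|/(|x0|+|x1|+|x2|)*y0 + |x1|/(|x0|+|x1|+|x2|)*y1 + |x2|/(|x0|+|x1|+|x2|)*y2))^2
        / ((|x0|/(|x0|+|x1|+|x2|)*y0^2 + |x1|/(|x0|+|x1|+|x2|)*y1^2 + |x2|/(|x0|+|x1|+|x2|)*y2^2)
            - (|x0|/(|x0|+|x1|+|x2|)*y0 + |x1|/(|x0|+|x1|+|x2|)*y1 + |x2|/(|x0|+|x1|+|x2|)*y2)^2)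
      = (((|x0|/(|x0|+|x1|+|x2|)*x0^2 + |x1|/(|x0|+|x1|+|x2|)*x1^2 + |x2|/(|x0|+|x1|+|x2|)*x2^2)
        - (|x0|/(|x0|+|x1|+|x2|)*x0 + |x1|/(|x0|+|x1|+|x2|)*x1 + |x2|/(|x0|+|x1|+|x2|)*x2)^2)
          * ((|x0|/(|x0|+|x1|+|x2|)*y0^2 + |x1|/(|x0|+|x1|+|x2|)*y1^2 + |x2|/(|x0|+|x1|+|x2|)*y2^2)
            - (|x0|/(|x0|+|x1|+|x2|)*y0 + |x1|/(|x0|+|x1|+|x2|)*y1 + |x2|/(|x0|+|x1|+|x2|)*y2)^2)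
          - ((|x0|/(|x0|+|x1|+|x2|)*(x0*y0) + |x1|/(|x0|+|x1|+|x2|)*(x1*y1) + |x2|/(|x0|+|x1|+|x2|)*(x2*y2))
          - (|x0|/(|x0|+|x1|+|x2|)*x0 + |x1|/(|x0|+|x1|+|x2|)*x1 + |x2|/(|x0|+|x1|+|x2|)*x2)
            * (|x0|/(|x0|+|x1|+|x2|)*y0 + |x1|/(|x0|+|x1|+|x2|)*y1 + |x2|/(|x0|+|x1|+|x2|)*y2))^2)
        / ((|x0|/(|x0|+|x1|+|x2|)*y0^2 + |x1|/(|x0|+|x1|+|x2|)*y1^2 + |x2|/(|x0|+|x1|+|x2|)*y2^2)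
            - (|x0|/(|x0|+|x1|+|x2|)*y0 + |x1|/(|x0|+|x1|+|x2|)*y1 + |x2|/(|x0|+|x1|+|x2|)*y2)^2) := by
    rw [eq_div_iff hV2ne, sub_mul, div_mul_cancel₀ _ hV2ne]
  rw [hstep, hI, hV2']
  rw [div_eq_div_iff (by positivity) (by positivity : ((|x0|+|x1|+|x2|)^2 : ℝ) ≠ 0)]
  field_simp

/-- For zero-sum orthogonal unit vectors `l₁, l₂ ∈ ℝ³` with all entries
of `l₁` nonzero, the supremum over probability distributions `p` on `{1,2,3}` of
`Var_p(l₁) − Cov_p(l₁,l₂)²/Var_p(l₂)` (with the convention that the quotient term is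
`0` when `Var_p(l₂) = 0`, which is Lean's division convention) equals
`‖l₁‖₂⁴/‖l₁‖₁²`, attained by `p_α = |l₁_α|/‖l₁‖₁`. -/
theorem stmt_8 (l₁ l₂ : Fin 3 → ℝ)
    (hzs1 : ∑ α, l₁ α = 0) (hzs2 : ∑ α, l₂ α = 0)
    (horth : ∑ α, l₁ α * l₂ α = 0)
    (hn1 : ∑ α, (l₁ α) ^ 2 = 1) (hn2 : ∑ α, (l₂ α) ^ 2 = 1)
    (hnz : ∀ α, l₁ α ≠ 0) :
    IsGreatest
      { v : ℝ | ∃ p : Fin 3 → ℝ, (∀ α, 0 ≤ p α) ∧ (∑ α, p α) = 1 ∧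
          v = ((∑ α, p α * (l₁ α) ^ 2) - (∑ α, p α * l₁ α) ^ 2)
            - ((∑ α, p α * (l₁ α * l₂ α))
                - (∑ α, p α * l₁ α) * (∑ α, p α * l₂ α)) ^ 2
              / ((∑ α, p α * (l₂ α) ^ 2) - (∑ α, p α * l₂ α) ^ 2) }
      ((∑ α, (l₁ α) ^ 2) ^ 2 / (∑ α, |l₁ α|) ^ 2) ∧
    (let p : Fin 3 → ℝ := fun α => |l₁ α| / ∑ β, |l₁ β|
     ((∑ α, p α * (l₁ α) ^ 2) - (∑ α, p α * l₁ α) ^ 2)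
       - ((∑ α, p α * (l₁ α * l₂ α))
           - (∑ α, p α * l₁ α) * (∑ α, p α * l₂ α)) ^ 2
         / ((∑ α, p α * (l₂ α) ^ 2) - (∑ α, p α * l₂ α) ^ 2)
       = (∑ α, (l₁ α) ^ 2) ^ 2 / (∑ α, |l₁ α|) ^ 2) := by
  have e1 : l₁ 0 + l₁ 1 + l₁ 2 = 0 := by simpa [Fin.sum_univ_three] using hzs1
  have e2 : l₂ 0 + l₂ 1 + l₂ 2 = 0 := by simpa [Fin.sum_univ_three] using hzs2
  have e3 : l₁ 0 * l₂ 0 + l₁ 1 * l₂ 1 + l₁ 2 * l₂ 2 = 0 := by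
    simpa [Fin.sum_univ_three] using horth
  have e4 : (l₁ 0)^2 + (l₁ 1)^2 + (l₁ 2)^2 = 1 := by simpa [Fin.sum_univ_three] using hn1
  have e5 : (l₂ 0)^2 + (l₂ 1)^2 + (l₂ 2)^2 = 1 := by simpa [Fin.sum_univ_three] using hn2
  have hD : (0:ℝ) < |l₁ 0| + |l₁ 1| + |l₁ 2| := by
    have h0 := abs_pos.2 (hnz 0)
    have h1 := abs_nonneg (l₁ 1)
    have h2 := abs_nonneg (l₁ 2)
    linarith
  have hval := stmt8_val (l₁ 0) (l₁ 1) (l₁ 2) (l₂ 0) (l₂ 1) (l₂ 2)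
    e1 e2 e3 e4 e5 (hnz 0) (hnz 1) (hnz 2)
  refine ⟨⟨⟨fun α => |l₁ α| / ∑ β, |l₁ β|, fun α => by positivity, ?_, ?_⟩, ?_⟩, ?_⟩
  · simp only [Fin.sum_univ_three]
    field_simp
  · simp only [Fin.sum_univ_three]
    rw [e4, one_pow]
    exact hval.symm
  · rintro v ⟨p, hp0, hps, rfl⟩
    simp only [Fin.sum_univ_three] at hps ⊢
    rw [e4, one_pow]
    exact stmt8_ub (l₁ 0) (l₁ 1) (l₁ 2) (l₂ 0) (l₂ 1) (l₂ 2) (p 0) (p 1) (p 2)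
      e1 e2 e3 e4 e5 (hnz 0) (hnz 1) (hnz 2) (hp0 0) (hp0 1) (hp0 2) hps
  · intro p
    simp only [Fin.sum_univ_three, p]
    rw [e4, one_pow]
    exact hval
end
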